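/- Every zero z of the monic right quaternionic polynomial f_r(z) = zⁿ + z^{n−1} q_n + ⋯ + z q₂ + q₁ satisfies |z| ≤ (1 + α + β + Σ_{j=1}^{n} |q_j|²)^{1/6}, where α = Σ_{j=1}^{n} |q_j q_{n−1} − q_j q_n² + q_{j−1} q_n − q_{j−2}|², β = Σ_{j=1}^{n} |q_j q_n − q_{j−1}|², with q_{−1} = q₀ = 0. -/

import Mathlib

open scoped Quaternion
open Finset Matrix

noncomputable def specNorm {n : ℕ} (A : Matrix (Fin n) (Fin n) ℍ[ℝ]) : ℝ :=
  sSup {r : ℝ | ∃ x : Fin n → ℍ[ℝ], x ≠ 0 ∧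
    r = Real.sqrt (∑ i, ‖A.mulVec x i‖ ^ 2) / Real.sqrt (∑ i, ‖x i‖ ^ 2)}

private lemma icc_to_range {M : Type*} [AddCommMonoid M] (n : ℕ) (f : ℕ → M) :
    ∑ i ∈ Finset.Icc 1 n, f i = ∑ i ∈ Finset.range n, f (i + 1) := by
  rw [show Finset.Icc 1 n = Finset.Ico 1 (n + 1) by rw [Finset.Ico_add_one_right_eq_Icc],
    Finset.sum_Ico_eq_sum_range]
  simp [add_comm]

private lemma shift_sum {z : ℍ[ℝ]} (n : ℕ) (g : ℕ → ℍ[ℝ]) (hg : g 0 = 0) :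
    ∑ i ∈ Finset.range n, z ^ (i + 1) * g (i + 1)
      = (∑ i ∈ Finset.range n, z ^ i * g i) + z ^ n * g n := by
  have h1 := Finset.sum_range_succ' (fun j => z ^ j * g j) n
  have h2 := Finset.sum_range_succ (fun j => z ^ j * g j) n
  simp only [pow_zero, one_mul, hg, mul_zero, add_zero] at h1
  rw [h1] at h2
  exact h2

private lemma cs_bound (z : ℍ[ℝ]) (n : ℕ) (c : ℕ → ℍ[ℝ]) :
    ‖∑ i ∈ Finset.range n, z ^ i * c i‖ ^ 2
      ≤ (∑ i ∈ Finset.range n, ‖z‖ ^ (2 * i)) * ∑ i ∈ Finset.range n, ‖c i‖ ^ 2 := by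
  have h1 : ‖∑ i ∈ Finset.range n, z ^ i * c i‖
      ≤ ∑ i ∈ Finset.range n, ‖z‖ ^ i * ‖c i‖ := by
    refine (norm_sum_le _ _).trans_eq ?_
    exact Finset.sum_congr rfl fun i _ => by rw [norm_mul, norm_pow]
  calc ‖∑ i ∈ Finset.range n, z ^ i * c i‖ ^ 2
      ≤ (∑ i ∈ Finset.range n, ‖z‖ ^ i * ‖c i‖) ^ 2 :=
        pow_le_pow_left₀ (norm_nonneg _) h1 2
    _ ≤ (∑ i ∈ Finset.range n, (‖z‖ ^ i) ^ 2) * ∑ i ∈ Finset.range n, ‖c i‖ ^ 2 :=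
        Finset.sum_mul_sq_le_sq_mul_sq _ _ _
    _ = (∑ i ∈ Finset.range n, ‖z‖ ^ (2 * i)) * ∑ i ∈ Finset.range n, ‖c i‖ ^ 2 := by
        congr 1
        exact Finset.sum_congr rfl fun i _ => by rw [← pow_mul, mul_comm]

theorem bound_thm2 (n : ℕ) (hn : 3 ≤ n) (q : ℕ → ℍ[ℝ]) (hq0 : q 0 = 0) (z : ℍ[ℝ])
    (hz : z ^ n + ∑ i ∈ Finset.Icc 1 n, z ^ (i - 1) * q i = 0) :
    ‖z‖ ≤ (1 + (∑ j ∈ Finset.Icc 1 n,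
        ‖q j * q (n - 1) - q j * q n ^ 2 + q (j - 1) * q n - q (j - 2)‖ ^ 2) +
      (∑ j ∈ Finset.Icc 1 n, ‖q j * q n - q (j - 1)‖ ^ 2) +
      ∑ j ∈ Finset.Icc 1 n, ‖q j‖ ^ 2) ^ ((1 : ℝ) / 6) := by
  set c : ℕ → ℍ[ℝ] := fun j => q j * q n - q (j - 1) with hc
  set d : ℕ → ℍ[ℝ] :=
    fun j => q j * q (n - 1) - q j * q n ^ 2 + q (j - 1) * q n - q (j - 2) with hd
  have hc0 : c 0 = 0 := by simp [hc, hq0]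
  -- rewrite hypothesis as range sum
  have hzr : z ^ n = -∑ i ∈ Finset.range n, z ^ i * q (i + 1) := by
    rw [icc_to_range n (fun i => z ^ (i - 1) * q i)] at hz
    simp only [Nat.add_sub_cancel] at hz
    exact eq_neg_of_add_eq_zero_left hz
  have e1 : ∀ (g : ℕ → ℍ[ℝ]), ∑ i ∈ Finset.range n, z * (z ^ i * g (i + 1))
      = ∑ i ∈ Finset.range n, z ^ (i + 1) * g (i + 1) :=
    fun g => Finset.sum_congr rfl fun i _ => by rw [← mul_assoc, ← pow_succ']
  have hE1 : z ^ (n + 1) = ∑ i ∈ Finset.range n, z ^ i * c (i + 1) := by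
    have key : ∑ i ∈ Finset.range n, z ^ i * c (i + 1)
        = (∑ i ∈ Finset.range n, z ^ i * q (i + 1)) * q n
          - ∑ i ∈ Finset.range n, z ^ i * q i := by
      rw [Finset.sum_mul, ← Finset.sum_sub_distrib]
      refine Finset.sum_congr rfl fun i _ => ?_
      simp only [hc, Nat.add_sub_cancel]
      noncomm_ring
    rw [key, pow_succ', hzr, mul_neg, Finset.mul_sum, e1 q, shift_sum n q hq0, hzr,
      neg_add, neg_mul, neg_neg]
    abel
  have hE2 : z ^ (n + 2) = ∑ i ∈ Finset.range n, z ^ i * d (i + 1) := by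
    have key : ∑ i ∈ Finset.range n, z ^ i * d (i + 1)
        = (∑ i ∈ Finset.range n, z ^ i * c i)
          + (∑ i ∈ Finset.range n, z ^ i * q (i + 1)) * (q (n - 1) - q n * q n) := by
      rw [Finset.sum_mul, ← Finset.sum_add_distrib]
      refine Finset.sum_congr rfl fun i _ => ?_
      simp only [hc, hd, Nat.add_sub_cancel, show i + 1 - 2 = i - 1 from by omega]
      noncomm_ring
    have hpow : z ^ (n + 2) = z * z ^ (n + 1) := by rw [← pow_succ']
    rw [key, hpow, hE1, Finset.mul_sum, e1 c, shift_sum n c hc0]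
    congr 1
    rw [hzr]
    simp only [hc]
    noncomm_ring
  -- norms
  set a : ℝ := ‖z‖ with ha
  set T : ℝ := ∑ i ∈ Finset.range n, a ^ (2 * i) with hT
  set S : ℝ := ∑ i ∈ Finset.range n, ‖q (i + 1)‖ ^ 2 with hS
  set B : ℝ := ∑ i ∈ Finset.range n, ‖c (i + 1)‖ ^ 2 with hB
  set A : ℝ := ∑ i ∈ Finset.range n, ‖d (i + 1)‖ ^ 2 with hA
  have hTnn : ∀ i ∈ Finset.range n, (0:ℝ) ≤ a ^ (2 * i) := fun i _ => by positivity
  have hT1 : (1:ℝ) ≤ T := by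
    have h0 : (0:ℕ) ∈ Finset.range n := Finset.mem_range.mpr (by omega)
    have := Finset.single_le_sum hTnn h0
    simpa using this
  have hT0 : (0:ℝ) < T := lt_of_lt_of_le one_pos hT1
  have hb1 : a ^ (2 * n) ≤ T * S := by
    have : a ^ (2 * n) = ‖z ^ n‖ ^ 2 := by rw [norm_pow, ← pow_mul, mul_comm]
    rw [this, hzr, norm_neg]
    exact cs_bound z n (fun i => q (i + 1))
  have hb2 : a ^ (2 * (n + 1)) ≤ T * B := by
    have : a ^ (2 * (n + 1)) = ‖z ^ (n + 1)‖ ^ 2 := by rw [norm_pow, ← pow_mul, mul_comm]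
    rw [this, hE1]
    exact cs_bound z n (fun i => c (i + 1))
  have hb3 : a ^ (2 * (n + 2)) ≤ T * A := by
    have : a ^ (2 * (n + 2)) = ‖z ^ (n + 2)‖ ^ 2 := by rw [norm_pow, ← pow_mul, mul_comm]
    rw [this, hE2]
    exact cs_bound z n (fun i => d (i + 1))
  -- split a^6 * T
  obtain ⟨m, rfl⟩ : ∃ m, n = m + 3 := ⟨n - 3, by omega⟩
  have hsplit : a ^ 6 * T = (∑ i ∈ Finset.range m, a ^ (2 * (i + 3)))
      + a ^ (2 * (m + 3)) + a ^ (2 * (m + 4)) + a ^ (2 * (m + 5)) := by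
    rw [hT, Finset.mul_sum, show m + 3 = (m + 2) + 1 from rfl, Finset.sum_range_succ,
      show m + 2 = (m + 1) + 1 from rfl, Finset.sum_range_succ, Finset.sum_range_succ]
    have : ∀ i, a ^ 6 * a ^ (2 * i) = a ^ (2 * (i + 3)) := fun i => by
      rw [← pow_add]; ring_nf
    simp only [this]
  have hsub : (∑ i ∈ Finset.range m, a ^ (2 * (i + 3))) ≤ T := by
    have heq : ∑ i ∈ Finset.range m, a ^ (2 * (i + 3))
        = ∑ j ∈ Finset.Ico 3 (m + 3), a ^ (2 * j) := by
      rw [Finset.sum_Ico_eq_sum_range]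
      simp only [show m + 3 - 3 = m from by omega]
      exact Finset.sum_congr rfl fun i _ => by rw [add_comm 3 i]
    rw [heq, hT]
    refine Finset.sum_le_sum_of_subset_of_nonneg ?_ (fun i hi _ => by positivity)
    intro x hx
    simp only [Finset.mem_Ico] at hx
    exact Finset.mem_range.mpr hx.2
  have h6T : a ^ 6 * T ≤ (1 + A + B + S) * T := by
    have := hb1
    calc a ^ 6 * T
        = (∑ i ∈ Finset.range m, a ^ (2 * (i + 3)))
          + a ^ (2 * (m + 3)) + a ^ (2 * (m + 4)) + a ^ (2 * (m + 5)) := hsplit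
      _ ≤ T + T * S + T * B + T * A := by
          have e2 : a ^ (2 * (m + 4)) = a ^ (2 * ((m + 3) + 1)) := by ring_nf
          have e3 : a ^ (2 * (m + 5)) = a ^ (2 * ((m + 3) + 2)) := by ring_nf
          rw [e2, e3]
          gcongr <;> first | exact hsub | exact hb1 | exact hb2 | exact hb3
      _ = (1 + A + B + S) * T := by ring
  have h6 : a ^ 6 ≤ 1 + A + B + S := le_of_mul_le_mul_right h6T hT0
  -- convert to Icc sums
  have hAe : A = ∑ j ∈ Finset.Icc 1 (m + 3),
      ‖q j * q (m + 3 - 1) - q j * q (m + 3) ^ 2 + q (j - 1) * q (m + 3) - q (j - 2)‖ ^ 2 := by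
    rw [icc_to_range (m + 3) (fun j =>
      ‖q j * q (m + 3 - 1) - q j * q (m + 3) ^ 2 + q (j - 1) * q (m + 3) - q (j - 2)‖ ^ 2)]
  have hBe : B = ∑ j ∈ Finset.Icc 1 (m + 3), ‖q j * q (m + 3) - q (j - 1)‖ ^ 2 := by
    rw [icc_to_range (m + 3) (fun j => ‖q j * q (m + 3) - q (j - 1)‖ ^ 2)]
  have hSe : S = ∑ j ∈ Finset.Icc 1 (m + 3), ‖q j‖ ^ 2 := by
    rw [icc_to_range (m + 3) (fun j => ‖q j‖ ^ 2)]
  rw [← hAe, ← hBe, ← hSe]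
  have hM1 : (1:ℝ) ≤ 1 + A + B + S := by
    have hA0 : (0:ℝ) ≤ A := Finset.sum_nonneg fun i _ => by positivity
    have hB0 : (0:ℝ) ≤ B := Finset.sum_nonneg fun i _ => by positivity
    have hS0 : (0:ℝ) ≤ S := Finset.sum_nonneg fun i _ => by positivity
    linarith
  have key : (a ^ 6) ^ ((1:ℝ)/6) ≤ (1 + A + B + S) ^ ((1:ℝ)/6) :=
    Real.rpow_le_rpow (by positivity) h6 (by norm_num)
  have haeq : (a ^ 6 : ℝ) ^ ((1:ℝ)/6) = a := by
    rw [← Real.rpow_natCast a 6, ← Real.rpow_mul (norm_nonneg z)]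
    norm_num [ha]
  rw [haeq] at key
  exact key
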